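/- Fix d ≥ 2 and n ≥ d+1, and let f = (f_1,…,f_n) be any basis of ℝ^n. Define the linear map ψ : (ℝ^n)^{d−1} → Λ^d ℝ^n by ψ(m_2,…,m_d) = Σ_{i=2}^{d} f_{[d]∖{i}} ∧ m_i, where f_{[d]∖{i}} := f_1 ∧ … ∧ f_{i−1} ∧ f_{i+1} ∧ … ∧ f_d. Then the image of ψ equals the span of {f_τ : τ ⊆ [n], |τ| = d, τ ≤_p {1,3,4,…,d,n}} (equivalently, of f_{[d]} together with f_{([d]∖{i})∪{v}} for all 2 ≤ i ≤ d and d+1 ≤ v ≤ n), and the kernel of ψ has dimension d²−d−1. -/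

import Mathlib

open scoped BigOperators

section Defs

variable {α : Type*}

/-- A family of finite sets is a simplicial complex if it is closed under taking subsets. -/
def IsComplex (K : Finset (Finset α)) : Prop :=
  ∀ σ ∈ K, ∀ τ ⊆ σ, τ ∈ K

/-- `K` is pure with all facets of cardinality `d` (i.e. pure `(d-1)`-dimensional). -/
def PureCx (d : ℕ) (K : Finset (Finset α)) : Prop :=
  (∀ σ ∈ K, σ.card ≤ d) ∧ ∀ σ ∈ K, ∃ τ ∈ K, σ ⊆ τ ∧ τ.card = d

/-- `K` is `(d-1)`-dimensional: the largest faces have `d` elements. -/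
def DimPred (d : ℕ) (K : Finset (Finset α)) : Prop :=
  (∀ σ ∈ K, σ.card ≤ d) ∧ ∃ σ ∈ K, σ.card = d

/-- The increasing embedding of `Fin (d-1)` into `Fin d` skipping `r`. -/
def skipF {d : ℕ} (r : Fin d) (k : Fin (d - 1)) : Fin d :=
  if (k : ℕ) < (r : ℕ) then ⟨(k : ℕ), by have := k.isLt; omega⟩
  else ⟨(k : ℕ) + 1, by have := k.isLt; omega⟩

/-- The cofactor `C_{r,c}(M)` (0-indexed). -/
noncomputable def cofactor {d : ℕ} (M : Matrix (Fin d) (Fin d) ℝ) (r c : Fin d) : ℝ :=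
  (-1 : ℝ) ^ ((r : ℕ) + (c : ℕ)) * (M.submatrix (skipF r) (skipF c)).det

/-- The matrix `M_{p,σ}` whose `j`-th column is `(p(v_j), 1)`, `v_j` the `j`-th smallest
element of `σ`. -/
noncomputable def faceMat [LinearOrder α] (d : ℕ) (p : α → Fin (d - 1) → ℝ)
    (σ : Finset α) (hσ : σ.card = d) : Matrix (Fin d) (Fin d) ℝ :=
  fun i j => if h : (i : ℕ) < d - 1 then p (σ.orderEmbOfFin hσ j) ⟨i, h⟩ else 1

/-- The volume-rigidity matrix `𝔙(K,p)`. -/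
noncomputable def volMatrix [LinearOrder α] (d : ℕ) (K : Finset (Finset α))
    (p : α → Fin (d - 1) → ℝ) :
    Matrix (α × Fin (d - 1)) {σ : Finset α // σ ∈ K ∧ σ.card = d} ℝ :=
  fun vi σ =>
    if h : vi.1 ∈ σ.1 then
      cofactor (faceMat d p σ.1 σ.2.2) (Fin.castLE (Nat.sub_le d 1) vi.2)
        ((σ.1.orderIsoOfFin σ.2.2).symm ⟨vi.1, h⟩)
    else 0

/-- `p : V → ℝ^{d-1}` is generic: its coordinates are algebraically independent over `ℚ`. -/
def GenericEmb (d : ℕ) (V : Finset α) (p : α → Fin (d - 1) → ℝ) : Prop :=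
  AlgebraicIndependent ℚ (fun x : {a // a ∈ V} × Fin (d - 1) => p x.1.1 x.2)

/-- `K`, with vertex set `V`, is volume-rigid. -/
def VolumeRigid [Fintype α] [LinearOrder α] (d : ℕ) (V : Finset α)
    (K : Finset (Finset α)) : Prop :=
  ∀ p : α → Fin (d - 1) → ℝ, GenericEmb d V p →
    (volMatrix d K p).rank = (d - 1) * V.card - (d ^ 2 - d - 1)

/-- `sign(τ,σ) = (-1)^j` where the unique element of `σ \ τ` is the `j`-th smallest
element of `σ` (1-based). -/
def faceSgn [LinearOrder α] (τ σ : Finset α) : ℤ :=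
  if h : (σ \ τ).card = 1 then
    (-1 : ℤ) ^
      (((σ.sort (· ≤ ·)).idxOf ((σ \ τ).min' (Finset.card_pos.mp (by omega)))) + 1)
  else 0

/-- The boundary of the integral `(d-1)`-chain `z` of `K` vanishes. -/
def BoundaryZeroZ [LinearOrder α] (d : ℕ) (K : Finset (Finset α)) (z : Finset α → ℤ) : Prop :=
  ∀ τ : Finset α, τ.card = d - 1 →
    ∑ σ ∈ K.filter (fun σ => σ.card = d ∧ τ ⊆ σ), faceSgn τ σ * z σ = 0

/-- The boundary of the real `(d-1)`-chain `z` of `K` vanishes. -/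
def BoundaryZeroR [LinearOrder α] (d : ℕ) (K : Finset (Finset α)) (z : Finset α → ℝ) : Prop :=
  ∀ τ : Finset α, τ.card = d - 1 →
    ∑ σ ∈ K.filter (fun σ => σ.card = d ∧ τ ⊆ σ), (faceSgn τ σ : ℝ) * z σ = 0

/-- `K` is a minimal cycle over `ℤ`. -/
def IsMinimalCycleZ [LinearOrder α] (d : ℕ) (K : Finset (Finset α)) : Prop :=
  (∃ z : Finset α → ℤ, (∀ σ, ¬(σ ∈ K ∧ σ.card = d) → z σ = 0) ∧
      BoundaryZeroZ d K z ∧ ∀ σ ∈ K, σ.card = d → z σ ≠ 0) ∧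
  ∀ z : Finset α → ℤ, (∀ σ, ¬(σ ∈ K ∧ σ.card = d) → z σ = 0) →
    BoundaryZeroZ d K z → z ≠ 0 → ∀ σ ∈ K, σ.card = d → z σ ≠ 0

/-- `K` is `(d-1, d²-d-1)`-sparse on vertex set `V`. -/
def Sparse [DecidableEq α] (d : ℕ) (V : Finset α) (K : Finset (Finset α)) : Prop :=
  ∀ A ⊆ V, d ≤ A.card →
    (K.filter (fun σ => σ.card = d ∧ σ ⊆ A)).card ≤ (d - 1) * A.card - (d ^ 2 - d - 1)

/-- `K` is `(d-1, d²-d-1)`-tight on vertex set `V`. -/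
def Tight [DecidableEq α] (d : ℕ) (V : Finset α) (K : Finset (Finset α)) : Prop :=
  Sparse d V K ∧
    (K.filter (fun σ => σ.card = d)).card = (d - 1) * V.card - (d ^ 2 - d - 1)

end Defs

section Shifting

/-- The partial order `σ ≤_p τ`: equal cardinalities and the `i`-th smallest element of `σ`
is at most the `i`-th smallest element of `τ`, for every `i`. -/
def pLE {n : ℕ} (σ τ : Finset (Fin n)) : Prop :=
  List.Forall₂ (· ≤ ·) (σ.sort (· ≤ ·)) (τ.sort (· ≤ ·))

/-- The strict partial order `σ <_p τ`. -/
def pLT {n : ℕ} (σ τ : Finset (Fin n)) : Prop := pLE σ τ ∧ σ ≠ τ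

/-- `f_σ = f_{σ_1} ∧ ⋯ ∧ f_{σ_k}` in the exterior algebra of `ℝ^n`. -/
noncomputable def extWedge {n : ℕ} (f : Fin n → (Fin n → ℝ)) (σ : Finset (Fin n)) :
    ExteriorAlgebra ℝ (Fin n → ℝ) :=
  ((σ.sort (· ≤ ·)).map (fun i => ExteriorAlgebra.ι ℝ (f i))).prod

/-- The standard basis of `ℝ^n`. -/
noncomputable def stdVec (n : ℕ) : Fin n → (Fin n → ℝ) := fun i => Pi.single i 1

/-- The subspace spanned by `{e_τ : τ ∉ K, |τ| = k}`. -/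
noncomputable def faceIdeal {n : ℕ} (K : Finset (Finset (Fin n))) (k : ℕ) :
    Submodule ℝ (ExteriorAlgebra ℝ (Fin n → ℝ)) :=
  Submodule.span ℝ
    {x | ∃ τ : Finset (Fin n), τ ∉ K ∧ τ.card = k ∧ x = extWedge (stdVec n) τ}

/-- The quotient map `q`. -/
noncomputable def qMap {n : ℕ} (K : Finset (Finset (Fin n))) (k : ℕ) :
    ExteriorAlgebra ℝ (Fin n → ℝ) → ExteriorAlgebra ℝ (Fin n → ℝ) ⧸ faceIdeal K k :=
  fun x => Submodule.Quotient.mk x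

/-- The shifted family `Δ^<(K)` associated with a strict order `lt` on subsets of `[n]`,
computed with respect to the basis `f`. -/
def DeltaLt {n : ℕ} (K : Finset (Finset (Fin n))) (f : Fin n → (Fin n → ℝ))
    (lt : Finset (Fin n) → Finset (Fin n) → Prop) : Set (Finset (Fin n)) :=
  {σ | qMap K σ.card (extWedge f σ) ∉
    Submodule.span ℝ (qMap K σ.card '' (extWedge f '' {τ | lt τ σ ∧ τ.card = σ.card}))}

/-- `Δ^p(K)`, computed with respect to the basis `f`. -/
def DeltaP {n : ℕ} (K : Finset (Finset (Fin n))) (f : Fin n → (Fin n → ℝ)) :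
    Set (Finset (Fin n)) := DeltaLt K f pLT

/-- `f` is a generic basis of `ℝ^n`: it is a basis, `f_1 = (1,…,1)`, and the coordinates of
`f_2, …, f_n` are algebraically independent over `ℚ`. -/
def GenericBasis {n : ℕ} (f : Fin n → (Fin n → ℝ)) : Prop :=
  (∃ b : Module.Basis (Fin n) ℝ (Fin n → ℝ), ⇑b = f) ∧
  (∀ i : Fin n, (i : ℕ) = 0 → f i = 1) ∧
  AlgebraicIndependent ℚ (fun x : {i : Fin n // (i : ℕ) ≠ 0} × Fin n => f x.1.1 x.2)

/-- The set `{1,3,4,…,d,n}` (1-based), i.e. `{0,2,3,…,d-1,n-1}` as a subset of `Fin n`. -/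
def sigma0 (d n : ℕ) : Finset (Fin n) :=
  Finset.univ.filter (fun i : Fin n =>
    (i : ℕ) = 0 ∨ (2 ≤ (i : ℕ) ∧ (i : ℕ) + 1 ≤ d) ∨ (i : ℕ) + 1 = n)

end Shifting

/-- The set `[d] ∖ {i}` (1-based), for `i` ranging over `2,…,d` (encoded by `Fin (d-1)`),
as a subset of `Fin n` (0-based). -/
def faceDel (d n : ℕ) (i : Fin (d - 1)) : Finset (Fin n) :=
  Finset.univ.filter (fun v : Fin n => (v : ℕ) < d ∧ (v : ℕ) ≠ (i : ℕ) + 1)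

/-- The linear map `ψ(m_2,…,m_d) = Σ_{i=2}^d f_{[d]∖{i}} ∧ m_i`. -/
noncomputable def psiMap (d n : ℕ) (f : Fin n → (Fin n → ℝ)) :
    (Fin (d - 1) → (Fin n → ℝ)) →ₗ[ℝ] ExteriorAlgebra ℝ (Fin n → ℝ) :=
  ∑ i : Fin (d - 1),
    (LinearMap.mulLeft ℝ (extWedge f (faceDel d n i))).comp
      ((ExteriorAlgebra.ι ℝ).comp (LinearMap.proj i))

namespace PsiAux

open ExteriorAlgebra

/-! ### Exterior algebra list lemmas -/

variable {n : ℕ}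

lemma prod_mul_iota (l : List (Fin n → ℝ)) (x : Fin n → ℝ) :
    (l.map (ι ℝ)).prod * ι ℝ x = ((-1 : ℝ) ^ l.length) • (ι ℝ x * (l.map (ι ℝ)).prod) := by
  induction l with
  | nil => simp
  | cons a t ih =>
    have swap : ι ℝ a * ι ℝ x = -(ι ℝ x * ι ℝ a) :=
      eq_neg_of_add_eq_zero_left (ι_add_mul_swap a x)
    simp only [List.map_cons, List.prod_cons, List.length_cons]
    rw [mul_assoc, ih, mul_smul_comm, ← mul_assoc, swap, neg_mul, smul_neg, pow_succ,
      mul_comm ((-1 : ℝ) ^ t.length) (-1 : ℝ), mul_smul, neg_one_smul, mul_assoc]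

lemma prod_mul_iota_of_mem (l : List (Fin n → ℝ)) (x : Fin n → ℝ) (hx : x ∈ l) :
    (l.map (ι ℝ)).prod * ι ℝ x = 0 := by
  induction l with
  | nil => simp at hx
  | cons a t ih =>
    simp only [List.map_cons, List.prod_cons, mul_assoc]
    rcases List.mem_cons.mp hx with rfl | hx
    · rw [prod_mul_iota, mul_smul_comm, ← mul_assoc, ι_sq_zero, zero_mul, smul_zero]
    · rw [ih hx, mul_zero]

lemma prod_mul_iota_orderedInsert (f : Fin n → (Fin n → ℝ)) (v : Fin n) :
    ∀ l : List (Fin n), l.Pairwise (· ≤ ·) → v ∉ l →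
      (l.map (fun i => ι ℝ (f i))).prod * ι ℝ (f v)
        = ((-1 : ℝ) ^ (l.countP (fun a => v < a)))
          • ((l.orderedInsert (· ≤ ·) v).map (fun i => ι ℝ (f i))).prod := by
  intro l
  induction l with
  | nil => intro _ _; simp [List.orderedInsert]
  | cons a t ih =>
    intro hs hv
    have ha : ∀ b ∈ t, a ≤ b := (List.pairwise_cons.mp hs).1
    have ht : t.Pairwise (· ≤ ·) := (List.pairwise_cons.mp hs).2
    have hva : v ≠ a := fun h => hv (h ▸ List.mem_cons_self (a := a) (l := t))
    have hvt : v ∉ t := fun h => hv (List.mem_cons_of_mem a h)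
    by_cases h : v ≤ a
    · have hlt : ∀ b ∈ a :: t, v < b := by
        intro b hb
        rcases List.mem_cons.mp hb with rfl | hb
        · exact lt_of_le_of_ne h hva
        · exact lt_of_le_of_ne (le_trans h (ha b hb)) (fun he => hvt (he ▸ hb))
      have hcount : (a :: t).countP (fun a => decide (v < a)) = (a :: t).length :=
        List.countP_eq_length.mpr (fun b hb => decide_eq_true (hlt b hb))
      have hoi : (a :: t).orderedInsert (· ≤ ·) v = v :: a :: t := by
        simp [List.orderedInsert, h]
      rw [hcount, hoi]
      have := prod_mul_iota ((a :: t).map f) (f v)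
      simp only [List.length_map] at this
      rw [show ((a :: t).map fun i => ι ℝ (f i)) = ((a :: t).map f).map (ι ℝ) by
        rw [List.map_map]; rfl]
      rw [this]
      simp [List.map_map, Function.comp_def]
    · have hav : ¬ v < a := fun hlt => h (le_of_lt hlt)
      have hcount : (a :: t).countP (fun a => decide (v < a))
          = t.countP (fun a => decide (v < a)) := by
        rw [List.countP_cons]
        simp [hav]
      have hoi : (a :: t).orderedInsert (· ≤ ·) v = a :: t.orderedInsert (· ≤ ·) v := by
        simp [List.orderedInsert, h]
      rw [hcount, hoi]
      simp only [List.map_cons, List.prod_cons, mul_assoc]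
      rw [ih ht hvt, mul_smul_comm]

/-! ### Finset versions -/

lemma sort_insert_eq (σ : Finset (Fin n)) (v : Fin n) (hv : v ∉ σ) :
    (insert v σ).sort (· ≤ ·) = (σ.sort (· ≤ ·)).orderedInsert (· ≤ ·) v := by
  refine List.Perm.eq_of_pairwise' (Finset.pairwise_sort _ _)
    ((Finset.pairwise_sort σ (· ≤ ·)).orderedInsert v _) ?_
  have h1 : ((insert v σ).sort (· ≤ ·) : Multiset (Fin n)) = (v :: σ.sort (· ≤ ·) : List (Fin n)) := by
    rw [Finset.sort_eq, Finset.insert_val_of_notMem hv]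
    rw [← Finset.sort_eq σ (· ≤ ·)]
    rfl
  exact (Multiset.coe_eq_coe.mp h1).trans (List.perm_orderedInsert _ _ _).symm

lemma extWedge_mul_of_mem (f : Fin n → (Fin n → ℝ)) (σ : Finset (Fin n)) (v : Fin n)
    (hv : v ∈ σ) : extWedge f σ * ι ℝ (f v) = 0 := by
  rw [extWedge, show ((σ.sort (· ≤ ·)).map fun i => ι ℝ (f i)) = ((σ.sort (· ≤ ·)).map f).map (ι ℝ)
    by rw [List.map_map]; rfl]
  exact prod_mul_iota_of_mem _ _ (List.mem_map_of_mem (f := f) ((Finset.mem_sort _).mpr hv))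

lemma extWedge_mul_of_not_mem (f : Fin n → (Fin n → ℝ)) (σ : Finset (Fin n)) (v : Fin n)
    (hv : v ∉ σ) :
    extWedge f σ * ι ℝ (f v)
      = ((-1 : ℝ) ^ ((σ.sort (· ≤ ·)).countP (fun a => v < a))) • extWedge f (insert v σ) := by
  rw [extWedge, extWedge, sort_insert_eq σ v hv]
  exact prod_mul_iota_orderedInsert f v _ (Finset.pairwise_sort _ _)
    (by simp [Finset.mem_sort, hv])

lemma extWedge_mul_pm (f : Fin n → (Fin n → ℝ)) (σ : Finset (Fin n)) (v : Fin n)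
    (hv : v ∉ σ) :
    ∃ c : ℝ, (c = 1 ∨ c = -1) ∧ extWedge f σ * ι ℝ (f v) = c • extWedge f (insert v σ) :=
  ⟨_, neg_one_pow_eq_or ℝ _, extWedge_mul_of_not_mem f σ v hv⟩

end PsiAux
namespace PsiAux

/-! ### Counting on `Fin` -/

lemma card_filter_lt (m N : ℕ) (h : m ≤ N) :
    (Finset.univ.filter (fun v : Fin N => (v : ℕ) < m)).card = m := by
  have he : (Finset.univ.filter (fun v : Fin N => (v : ℕ) < m))
      = (Finset.range m).attachFin (fun x hx => lt_of_lt_of_le (Finset.mem_range.mp hx) h) := by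
    ext a
    simp [Finset.mem_attachFin]
  rw [he, Finset.card_attachFin, Finset.card_range]

/-! ### `fullD`, `faceDel`, `sigma0` -/

def fullD (d n : ℕ) : Finset (Fin n) := Finset.univ.filter (fun v : Fin n => (v : ℕ) < d)

lemma mem_fullD {d n : ℕ} (v : Fin n) : v ∈ fullD d n ↔ (v : ℕ) < d := by simp [fullD]

lemma card_fullD (d n : ℕ) (h : d ≤ n) : (fullD d n).card = d := card_filter_lt d n h

lemma mem_faceDel {d n : ℕ} (i : Fin (d - 1)) (v : Fin n) :
    v ∈ faceDel d n i ↔ (v : ℕ) < d ∧ (v : ℕ) ≠ (i : ℕ) + 1 := by simp [faceDel]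

def uOf (d n : ℕ) (hn : d ≤ n) (i : Fin (d - 1)) : Fin n :=
  ⟨(i : ℕ) + 1, by have := i.isLt; omega⟩

lemma faceDel_eq_erase {d n : ℕ} (hn : d ≤ n) (i : Fin (d - 1)) :
    faceDel d n i = (fullD d n).erase (uOf d n hn i) := by
  ext v
  simp only [mem_faceDel, Finset.mem_erase, mem_fullD, uOf, Ne, Fin.ext_iff]
  tauto

lemma card_faceDel {d n : ℕ} (hn : d ≤ n) (i : Fin (d - 1)) :
    (faceDel d n i).card = d - 1 := by
  rw [faceDel_eq_erase hn i, Finset.card_erase_of_mem, card_fullD d n hn]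
  rw [mem_fullD]
  have := i.isLt; simp [uOf]; omega

lemma insert_uOf_faceDel {d n : ℕ} (hn : d ≤ n) (i : Fin (d - 1)) :
    insert (uOf d n hn i) (faceDel d n i) = fullD d n := by
  rw [faceDel_eq_erase hn i, Finset.insert_erase]
  rw [mem_fullD]
  have := i.isLt; simp [uOf]; omega

def vOf (d n : ℕ) (m : Fin (n - d)) : Fin n := ⟨d + (m : ℕ), by have := m.isLt; omega⟩

lemma vOf_not_mem_faceDel {d n : ℕ} (i : Fin (d - 1)) (m : Fin (n - d)) :
    vOf d n m ∉ faceDel d n i := by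
  rw [mem_faceDel]; simp [vOf]

lemma card_insert_vOf {d n : ℕ} (hd : 2 ≤ d) (hn : d ≤ n) (i : Fin (d - 1)) (m : Fin (n - d)) :
    (insert (vOf d n m) (faceDel d n i)).card = d := by
  rw [Finset.card_insert_of_notMem (vOf_not_mem_faceDel i m), card_faceDel hn i]
  omega

lemma mem_sigma0 {d n : ℕ} (v : Fin n) :
    v ∈ sigma0 d n ↔ ((v : ℕ) = 0 ∨ (2 ≤ (v : ℕ) ∧ (v : ℕ) + 1 ≤ d) ∨ (v : ℕ) + 1 = n) := by
  simp [sigma0]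

lemma sigma0_eq {d n : ℕ} (hd : 2 ≤ d) (hn : d + 1 ≤ n) :
    sigma0 d n = insert (vOf d n ⟨n - 1 - d, by omega⟩)
      (faceDel d n ⟨0, by omega⟩) := by
  ext v
  have := v.isLt
  simp only [mem_sigma0, Finset.mem_insert, mem_faceDel, vOf, Fin.ext_iff]
  omega

lemma card_sigma0 {d n : ℕ} (hd : 2 ≤ d) (hn : d + 1 ≤ n) : (sigma0 d n).card = d := by
  rw [sigma0_eq hd hn, card_insert_vOf hd (by omega) _ _]

lemma sigma0_filter_lt {d n : ℕ} (hd : 2 ≤ d) (hn : d + 1 ≤ n) :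
    (sigma0 d n).filter (fun v : Fin n => (v : ℕ) < d) = faceDel d n ⟨0, by omega⟩ := by
  ext v
  have := v.isLt
  simp only [Finset.mem_filter, mem_sigma0, mem_faceDel]
  omega

/-! ### `orderEmbOfFin` lemmas -/

lemma orderEmb_gap {N k : ℕ} (ρ : Finset (Fin N)) (h : ρ.card = k) :
    ∀ m : ℕ, ∀ i j : Fin k, (i : ℕ) + m = (j : ℕ) →
      ((ρ.orderEmbOfFin h i : Fin N) : ℕ) + m ≤ ((ρ.orderEmbOfFin h j : Fin N) : ℕ) := by
  intro m
  induction m with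
  | zero =>
    intro i j hij
    have : i = j := Fin.ext (by omega)
    simp [this]
  | succ m ih =>
    intro i j hij
    have hj : 0 < (j : ℕ) := by omega
    set j' : Fin k := ⟨(j : ℕ) - 1, by have := j.isLt; omega⟩ with hj'
    have h1 := ih i j' (by simp [hj']; omega)
    have h2 : ρ.orderEmbOfFin h j' < ρ.orderEmbOfFin h j :=
      (ρ.orderEmbOfFin h).strictMono (by rw [Fin.lt_def]; simp [hj']; omega)
    rw [Fin.lt_def] at h2
    omega

lemma filter_eq_image {N k : ℕ} (ρ : Finset (Fin N)) (h : ρ.card = k)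
    (p : Fin N → Prop) [DecidablePred p] :
    ρ.filter p = (Finset.univ.filter (fun j : Fin k => p (ρ.orderEmbOfFin h j))).image
      (ρ.orderEmbOfFin h) := by
  ext x
  simp only [Finset.mem_filter, Finset.mem_image, Finset.mem_univ, true_and]
  constructor
  · rintro ⟨hx, hp⟩
    have hx' : x ∈ Set.range (ρ.orderEmbOfFin h) := by
      rw [Finset.range_orderEmbOfFin]; exact hx
    obtain ⟨j, rfl⟩ := hx'
    exact ⟨j, hp, rfl⟩
  · rintro ⟨j, hp, rfl⟩
    exact ⟨Finset.orderEmbOfFin_mem ρ h j, hp⟩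

lemma filter_card_eq {N k : ℕ} (ρ : Finset (Fin N)) (h : ρ.card = k)
    (p : Fin N → Prop) [DecidablePred p] :
    (ρ.filter p).card
      = (Finset.univ.filter (fun j : Fin k => p (ρ.orderEmbOfFin h j))).card := by
  rw [filter_eq_image ρ h p,
    Finset.card_image_of_injective _ (ρ.orderEmbOfFin h).injective]

lemma orderEmb_le_of_count {N d : ℕ} (hd : 2 ≤ d) (ρ : Finset (Fin N)) (h : ρ.card = d)
    (hcnt : d - 1 ≤ (ρ.filter (fun v : Fin N => (v : ℕ) < d)).card) :
    ∀ j : Fin d, (j : ℕ) < d - 1 → ((ρ.orderEmbOfFin h j : Fin N) : ℕ) ≤ (j : ℕ) + 1 := by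
  have hA : ((ρ.orderEmbOfFin h ⟨d - 2, by omega⟩ : Fin N) : ℕ) < d := by
    by_contra hA
    push_neg at hA
    have hsub : Finset.univ.filter (fun j : Fin d => ((ρ.orderEmbOfFin h j : Fin N) : ℕ) < d)
        ⊆ Finset.univ.filter (fun j : Fin d => (j : ℕ) < d - 2) := by
      intro k hk
      simp only [Finset.mem_filter, Finset.mem_univ, true_and] at hk ⊢
      by_contra hk2
      push_neg at hk2
      have := orderEmb_gap ρ h ((k : ℕ) - (d - 2)) ⟨d - 2, by omega⟩ k (by simp; omega)
      omega
    have h1 := Finset.card_le_card hsub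
    rw [card_filter_lt (d - 2) d (by omega)] at h1
    rw [filter_card_eq ρ h _] at hcnt
    omega
  intro j hj
  have := orderEmb_gap ρ h ((d - 2) - (j : ℕ)) j ⟨d - 2, by omega⟩ (by simp; omega)
  omega

lemma orderEmb_zero_of_mem {N d : ℕ} (hd : 1 ≤ d) (hN : 0 < N) (ρ : Finset (Fin N))
    (h : ρ.card = d) (h0 : (⟨0, hN⟩ : Fin N) ∈ ρ) :
    ∀ j : Fin d, (j : ℕ) = 0 → ((ρ.orderEmbOfFin h j : Fin N) : ℕ) = 0 := by
  intro j hj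
  have hje : j = ⟨0, by omega⟩ := Fin.ext (by simpa using hj)
  rw [hje]
  have he := Finset.orderEmbOfFin_zero h (show 0 < d by omega)
  have hle := Finset.min'_le ρ _ h0
  rw [← he] at hle
  rw [Fin.le_def] at hle
  simpa using hle

/-! ### `pLE` via `orderEmbOfFin` -/

lemma pLE_iff {N k : ℕ} (τ σ : Finset (Fin N)) (hτ : τ.card = k) (hσ : σ.card = k) :
    pLE τ σ ↔ ∀ j : Fin k, τ.orderEmbOfFin hτ j ≤ σ.orderEmbOfFin hσ j := by
  rw [pLE, List.forall₂_iff_get]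
  have l1 : (τ.sort (· ≤ ·)).length = k := by rw [Finset.length_sort, hτ]
  have l2 : (σ.sort (· ≤ ·)).length = k := by rw [Finset.length_sort, hσ]
  constructor
  · rintro ⟨-, hget⟩ j
    have hj1 : (j : ℕ) < (τ.sort (· ≤ ·)).length := by rw [l1]; exact j.isLt
    have hj2 : (j : ℕ) < (σ.sort (· ≤ ·)).length := by rw [l2]; exact j.isLt
    have := hget (j : ℕ) hj1 hj2
    rw [Finset.orderEmbOfFin_apply, Finset.orderEmbOfFin_apply]
    simpa [List.get_eq_getElem] using this
  · intro hle
    refine ⟨by rw [l1, l2], fun i h1 h2 => ?_⟩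
    have := hle ⟨i, by rw [← l1]; exact h1⟩
    rw [Finset.orderEmbOfFin_apply, Finset.orderEmbOfFin_apply] at this
    simpa [List.get_eq_getElem] using this

lemma charP {d n : ℕ} (hd : 2 ≤ d) (hn : d + 1 ≤ n) (τ : Finset (Fin n)) (hτ : τ.card = d) :
    pLE τ (sigma0 d n) ↔
      ((⟨0, by omega⟩ : Fin n) ∈ τ ∧ d - 1 ≤ (τ.filter (fun v : Fin n => (v : ℕ) < d)).card) := by
  have hσc := card_sigma0 (n := n) hd hn
  have hd0 : 0 < d := by omega
  have hd1 : 1 < d := by omega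
  have hn0 : 0 < n := by omega
  rw [pLE_iff τ _ hτ hσc]
  have hσ0mem : (⟨0, hn0⟩ : Fin n) ∈ sigma0 d n := by rw [mem_sigma0]; simp
  have hσcnt : d - 1 ≤ ((sigma0 d n).filter (fun v : Fin n => (v : ℕ) < d)).card := by
    rw [sigma0_filter_lt hd hn, card_faceDel (by omega)]
  have hσ0 := orderEmb_zero_of_mem hd0 hn0 _ hσc hσ0mem ⟨0, hd0⟩ rfl
  have hσle := orderEmb_le_of_count hd _ hσc hσcnt
  constructor
  · intro h
    constructor
    · have h0 := Fin.le_def.mp (h ⟨0, hd0⟩)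
      rw [hσ0] at h0
      have hm := Finset.orderEmbOfFin_mem τ hτ ⟨0, hd0⟩
      have he : τ.orderEmbOfFin hτ ⟨0, hd0⟩ = ⟨0, hn0⟩ := Fin.ext (by simp; omega)
      rwa [he] at hm
    · rw [filter_card_eq τ hτ]
      have hsub : Finset.univ.filter (fun j : Fin d => (j : ℕ) < d - 1)
          ⊆ Finset.univ.filter
            (fun j : Fin d => ((τ.orderEmbOfFin hτ j : Fin n) : ℕ) < d) := by
        intro k hk
        simp only [Finset.mem_filter, Finset.mem_univ, true_and] at hk ⊢
        have h1 := Fin.le_def.mp (h k)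
        have h2 := hσle k hk
        omega
      have hcc := Finset.card_le_card hsub
      rw [card_filter_lt (d - 1) d (by omega)] at hcc
      omega
  · rintro ⟨h0, hcnt⟩ j
    have hτle := orderEmb_le_of_count hd τ hτ hcnt
    have hτ0 := orderEmb_zero_of_mem hd0 hn0 τ hτ h0
    rw [Fin.le_def]
    by_cases hj0 : (j : ℕ) = 0
    · rw [hτ0 j hj0]
      omega
    · by_cases hjlast : (j : ℕ) = d - 1
      · have hmem : (⟨n - 1, by omega⟩ : Fin n) ∈ sigma0 d n := by
          rw [mem_sigma0]; right; right; simp; omega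
        have hmem' : (⟨n - 1, by omega⟩ : Fin n)
            ∈ Set.range ((sigma0 d n).orderEmbOfFin hσc) := by
          rw [Finset.range_orderEmbOfFin]; exact hmem
        obtain ⟨k, hk⟩ := hmem'
        have hkj : (sigma0 d n).orderEmbOfFin hσc k ≤ (sigma0 d n).orderEmbOfFin hσc j :=
          (((sigma0 d n).orderEmbOfFin hσc).le_iff_le).mpr
            (by rw [Fin.le_def]; have := k.isLt; omega)
        rw [Fin.le_def] at hkj
        have hkv : (((sigma0 d n).orderEmbOfFin hσc k : Fin n) : ℕ) = n - 1 := by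
          rw [hk]
        have := (τ.orderEmbOfFin hτ j).isLt
        omega
      · have h1 := hτle j (by omega)
        have hσ1 : 2 ≤ (((sigma0 d n).orderEmbOfFin hσc ⟨1, hd1⟩ : Fin n) : ℕ) := by
          have hmem := Finset.orderEmbOfFin_mem (sigma0 d n) hσc ⟨1, hd1⟩
          rw [mem_sigma0] at hmem
          have hgap := orderEmb_gap (sigma0 d n) hσc 1 ⟨0, hd0⟩ ⟨1, hd1⟩ (by simp)
          omega
        have hgap := orderEmb_gap (sigma0 d n) hσc ((j : ℕ) - 1) ⟨1, hd1⟩ j (by simp; omega)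
        omega

end PsiAux
namespace PsiAux

/-! ### The family `Jset` of admissible faces -/

def Jset (d n : ℕ) : Finset (Finset (Fin n)) :=
  insert (fullD d n)
    ((Finset.univ : Finset (Fin (d - 1) × Fin (n - d))).image
      (fun p => insert (vOf d n p.2) (faceDel d n p.1)))

lemma fullD_spec {d n : ℕ} (hd : 2 ≤ d) (hn : d + 1 ≤ n) :
    (fullD d n).card = d ∧ pLE (fullD d n) (sigma0 d n) := by
  have hc := card_fullD d n (by omega)
  refine ⟨hc, (charP hd hn _ hc).mpr ⟨?_, ?_⟩⟩
  · rw [mem_fullD]; simp; omega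
  · have : (fullD d n).filter (fun v : Fin n => (v : ℕ) < d) = fullD d n :=
      Finset.filter_eq_self.mpr (fun v hv => (mem_fullD v).mp hv)
    rw [this, hc]
    omega

lemma insert_vOf_spec {d n : ℕ} (hd : 2 ≤ d) (hn : d + 1 ≤ n)
    (i : Fin (d - 1)) (m : Fin (n - d)) :
    (insert (vOf d n m) (faceDel d n i)).card = d ∧
      pLE (insert (vOf d n m) (faceDel d n i)) (sigma0 d n) := by
  have hc := card_insert_vOf hd (by omega) i m
  refine ⟨hc, (charP hd hn _ hc).mpr ⟨?_, ?_⟩⟩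
  · refine Finset.mem_insert_of_mem ?_
    rw [mem_faceDel]
    simp; omega
  · have hfil : (insert (vOf d n m) (faceDel d n i)).filter (fun v : Fin n => (v : ℕ) < d)
        = faceDel d n i := by
      ext v
      simp only [Finset.mem_filter, Finset.mem_insert, mem_faceDel, vOf, Fin.ext_iff]
      constructor
      · rintro ⟨hv | hv, hlt⟩
        · omega
        · exact hv
      · rintro ⟨h1, h2⟩; exact ⟨Or.inr ⟨h1, h2⟩, h1⟩
    rw [hfil, card_faceDel (by omega)]

lemma mem_Jset_iff {d n : ℕ} (hd : 2 ≤ d) (hn : d + 1 ≤ n) (τ : Finset (Fin n)) :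
    τ ∈ Jset d n ↔ (τ.card = d ∧ pLE τ (sigma0 d n)) := by
  constructor
  · intro h
    rcases Finset.mem_insert.mp h with rfl | h
    · exact fullD_spec hd hn
    · obtain ⟨p, -, rfl⟩ := Finset.mem_image.mp h
      exact insert_vOf_spec hd hn p.1 p.2
  · rintro ⟨hcard, hple⟩
    obtain ⟨h0, hcnt⟩ := (charP hd hn τ hcard).mp hple
    obtain ⟨A, hA⟩ : ∃ A, A = τ.filter (fun v : Fin n => (v : ℕ) < d) := ⟨_, rfl⟩
    rw [← hA] at hcnt
    have hAsub : A ⊆ fullD d n := by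
      intro x hx
      rw [hA] at hx
      rw [mem_fullD]
      exact (Finset.mem_filter.mp hx).2
    have hAτ : A ⊆ τ := hA ▸ Finset.filter_subset _ _
    have hAB := Finset.card_filter_add_card_filter_not
      (s := τ) (p := fun v : Fin n => (v : ℕ) < d)
    rw [← hA] at hAB
    have hAle : A.card ≤ d := hcard ▸ Finset.card_le_card hAτ
    by_cases hc : A.card = d
    · have hτA : τ = A := (Finset.eq_of_subset_of_card_le hAτ (by omega)).symm
      have : τ = fullD d n := by
        rw [hτA]
        exact Finset.eq_of_subset_of_card_le hAsub (by rw [card_fullD d n (by omega), hc])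
      rw [this]
      exact Finset.mem_insert_self _ _
    · have hc' : A.card = d - 1 := by omega
      have hB1 : (τ.filter (fun v : Fin n => ¬ (v : ℕ) < d)).card = 1 := by omega
      obtain ⟨v, hv⟩ := Finset.card_eq_one.mp hB1
      have hvmem : v ∈ τ ∧ ¬ (v : ℕ) < d := by
        have : v ∈ τ.filter (fun v : Fin n => ¬ (v : ℕ) < d) := by
          rw [hv]; exact Finset.mem_singleton_self v
        exact Finset.mem_filter.mp this
      set m : Fin (n - d) := ⟨(v : ℕ) - d, by have := v.isLt; omega⟩ with hm
      have hvOf : vOf d n m = v := Fin.ext (by simp [vOf, hm]; omega)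
      have hcd : ((fullD d n) \ A).card = 1 := by
        rw [Finset.card_sdiff_of_subset hAsub, card_fullD d n (by omega), hc']
        omega
      obtain ⟨u, hu⟩ := Finset.card_eq_one.mp hcd
      have hA' : A = fullD d n \ {u} := by
        rw [← hu, Finset.sdiff_sdiff_eq_self hAsub]
      have humem : u ∈ fullD d n ∧ u ∉ A := by
        have : u ∈ fullD d n \ A := by rw [hu]; exact Finset.mem_singleton_self u
        exact Finset.mem_sdiff.mp this
      have hud : (u : ℕ) < d := (mem_fullD u).mp humem.1
      have hu0 : (u : ℕ) ≠ 0 := by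
        intro h00
        apply humem.2
        rw [hA, Finset.mem_filter]
        have : u = (⟨0, by omega⟩ : Fin n) := Fin.ext (by simpa using h00)
        rw [this]
        exact ⟨h0, by show (0 : ℕ) < d; omega⟩
      set i : Fin (d - 1) := ⟨(u : ℕ) - 1, by omega⟩ with hi
      have hui : (u : ℕ) = (i : ℕ) + 1 := by simp [hi]; omega
      have hface : faceDel d n i = A := by
        ext x
        have hx : x ∈ A ↔ x ∈ fullD d n \ {u} := by rw [hA']
        rw [mem_faceDel, hx, Finset.mem_sdiff, mem_fullD, Finset.mem_singleton]
        simp only [Ne, Fin.ext_iff]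
        omega
      have hτeq : τ = insert (vOf d n m) (faceDel d n i) := by
        rw [hvOf, hface]
        ext x
        simp only [Finset.mem_insert]
        constructor
        · intro hx
          by_cases hxd : (x : ℕ) < d
          · exact Or.inr (hA ▸ Finset.mem_filter.mpr ⟨hx, hxd⟩)
          · left
            have : x ∈ τ.filter (fun v : Fin n => ¬ (v : ℕ) < d) :=
              Finset.mem_filter.mpr ⟨hx, hxd⟩
            rw [hv] at this
            exact Finset.mem_singleton.mp this
        · rintro (rfl | hx)
          · exact hvmem.1
          · exact hAτ hx
      rw [hτeq]
      exact Finset.mem_insert_of_mem (Finset.mem_image.mpr ⟨(i, m), Finset.mem_univ _, rfl⟩)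

lemma card_Jset {d n : ℕ} (hd : 2 ≤ d) (hn : d + 1 ≤ n) :
    (Jset d n).card = 1 + (d - 1) * (n - d) := by
  have hnotmem : fullD d n ∉
      ((Finset.univ : Finset (Fin (d - 1) × Fin (n - d))).image
        (fun p => insert (vOf d n p.2) (faceDel d n p.1))) := by
    intro h
    obtain ⟨p, -, heq⟩ := Finset.mem_image.mp h
    have : vOf d n p.2 ∈ fullD d n := heq ▸ Finset.mem_insert_self _ _
    rw [mem_fullD] at this
    simp [vOf] at this
  have hinj : Function.Injective
      (fun p : Fin (d - 1) × Fin (n - d) => insert (vOf d n p.2) (faceDel d n p.1)) := by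
    rintro ⟨i, a⟩ ⟨i', a'⟩ heq
    simp only at heq
    have hva : vOf d n a = vOf d n a' := by
      have h1 : vOf d n a ∈ insert (vOf d n a') (faceDel d n i') := by
        rw [← heq]; exact Finset.mem_insert_self _ _
      rcases Finset.mem_insert.mp h1 with h | h
      · exact h
      · exact absurd h (vOf_not_mem_faceDel i' a)
    have haa : a = a' := by
      have := congrArg (fun x : Fin n => (x : ℕ)) hva
      simp [vOf] at this
      exact Fin.ext (by omega)
    have hfd : faceDel d n i = faceDel d n i' := by
      have h1 := congrArg (fun s => Finset.erase s (vOf d n a)) heq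
      rw [Finset.erase_insert (vOf_not_mem_faceDel i a), haa,
        Finset.erase_insert (vOf_not_mem_faceDel i' a')] at h1
      exact h1
    have hii : i = i' := by
      by_contra hne
      have hne' : (i : ℕ) ≠ (i' : ℕ) := fun h => hne (Fin.ext h)
      have hx : (⟨(i : ℕ) + 1, by have := i.isLt; omega⟩ : Fin n) ∈ faceDel d n i' := by
        rw [mem_faceDel]
        have := i.isLt
        simp
        omega
      rw [← hfd, mem_faceDel] at hx
      simp at hx
    rw [haa, hii]
  rw [Jset, Finset.card_insert_of_notMem hnotmem,
    Finset.card_image_of_injective _ hinj, Finset.card_univ]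
  simp [Fintype.card_prod]
  omega

end PsiAux
namespace PsiAux

open ExteriorAlgebra

lemma psiMap_apply (d n : ℕ) (f : Fin n → (Fin n → ℝ)) (m : Fin (d - 1) → (Fin n → ℝ)) :
    psiMap d n f m = ∑ i : Fin (d - 1), extWedge f (faceDel d n i) * ι ℝ (m i) := by
  simp [psiMap, LinearMap.sum_apply, LinearMap.mulLeft_apply]

lemma range_psiMap (d n : ℕ) (f : Fin n → (Fin n → ℝ))
    (b : Module.Basis (Fin n) ℝ (Fin n → ℝ)) (hb : ⇑b = f) :
    LinearMap.range (psiMap d n f) = Submodule.span ℝ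
      {x | ∃ (i : Fin (d - 1)) (v : Fin n),
        x = extWedge f (faceDel d n i) * ι ℝ (f v)} := by
  apply le_antisymm
  · rintro x ⟨m, rfl⟩
    rw [psiMap_apply]
    refine Submodule.sum_mem _ fun i _ => ?_
    have hmem : m i ∈ Submodule.span ℝ (Set.range f) := by
      have : Submodule.span ℝ (Set.range f) = ⊤ := by rw [← hb]; exact b.span_eq
      rw [this]; trivial
    set g : (Fin n → ℝ) →ₗ[ℝ] ExteriorAlgebra ℝ (Fin n → ℝ) :=
      (LinearMap.mulLeft ℝ (extWedge f (faceDel d n i))).comp (ι ℝ) with hg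
    have hgx : extWedge f (faceDel d n i) * ι ℝ (m i) = g (m i) := rfl
    rw [hgx]
    have h2 : g (m i) ∈ Submodule.map g (Submodule.span ℝ (Set.range f)) :=
      Submodule.mem_map_of_mem hmem
    rw [Submodule.map_span] at h2
    refine Submodule.span_mono ?_ h2
    rintro y ⟨-, ⟨v, rfl⟩, rfl⟩
    exact ⟨i, v, rfl⟩
  · rw [Submodule.span_le]
    rintro x ⟨i, v, rfl⟩
    refine ⟨Pi.single i (f v), ?_⟩
    rw [psiMap_apply]
    rw [Finset.sum_eq_single i]
    · rw [Pi.single_eq_same]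
    · intro j _ hj
      rw [Pi.single_eq_of_ne hj, map_zero, mul_zero]
    · simp

lemma span_S_eq_span_T (d n : ℕ) (hd : 2 ≤ d) (hn : d + 1 ≤ n) (f : Fin n → (Fin n → ℝ)) :
    Submodule.span ℝ
        {x | ∃ (i : Fin (d - 1)) (v : Fin n),
          x = extWedge f (faceDel d n i) * ι ℝ (f v)}
      = Submodule.span ℝ
        {x | ∃ τ : Finset (Fin n), τ.card = d ∧ pLE τ (sigma0 d n) ∧ x = extWedge f τ} := by
  apply le_antisymm <;> rw [Submodule.span_le]
  · rintro x ⟨i, v, rfl⟩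
    by_cases hv : v ∈ faceDel d n i
    · rw [extWedge_mul_of_mem f _ v hv]
      exact Submodule.zero_mem _
    · obtain ⟨c, -, hc⟩ := extWedge_mul_pm f _ v hv
      rw [hc]
      refine Submodule.smul_mem _ c (Submodule.subset_span ?_)
      rw [mem_faceDel] at hv
      push_neg at hv
      by_cases hvd : (v : ℕ) < d
      · have hvv : (v : ℕ) = (i : ℕ) + 1 := hv hvd
        have hveq : v = uOf d n (by omega) i := Fin.ext (by simpa [uOf] using hvv)
        have hins : insert v (faceDel d n i) = fullD d n := by
          rw [hveq]; exact insert_uOf_faceDel (by omega) i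
        rw [hins]
        obtain ⟨h1, h2⟩ := fullD_spec hd hn
        exact ⟨fullD d n, h1, h2, rfl⟩
      · set m : Fin (n - d) := ⟨(v : ℕ) - d, by have := v.isLt; omega⟩ with hm
        have hveq : v = vOf d n m := Fin.ext (by simp [vOf, hm]; omega)
        rw [hveq]
        obtain ⟨h1, h2⟩ := insert_vOf_spec hd hn i m
        exact ⟨_, h1, h2, rfl⟩
  · rintro x ⟨τ, hcard, hple, rfl⟩
    have hJ := (mem_Jset_iff hd hn τ).mpr ⟨hcard, hple⟩
    have key : ∀ (i : Fin (d - 1)) (v : Fin n), v ∉ faceDel d n i →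
        extWedge f (insert v (faceDel d n i)) ∈ Submodule.span ℝ
          {x | ∃ (i : Fin (d - 1)) (v : Fin n),
            x = extWedge f (faceDel d n i) * ι ℝ (f v)} := by
      intro i v hv
      obtain ⟨c, hcpm, hc⟩ := extWedge_mul_pm f _ v hv
      have hx : extWedge f (insert v (faceDel d n i))
          = c • (extWedge f (faceDel d n i) * ι ℝ (f v)) := by
        rw [hc, smul_smul]
        rcases hcpm with rfl | rfl <;> norm_num
      rw [hx]
      exact Submodule.smul_mem _ c (Submodule.subset_span ⟨i, v, rfl⟩)
    rcases Finset.mem_insert.mp hJ with rfl | himg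
    · have hi0 : (0 : ℕ) < d - 1 := by omega
      have hins : fullD d n = insert (uOf d n (by omega) ⟨0, hi0⟩) (faceDel d n ⟨0, hi0⟩) :=
        (insert_uOf_faceDel (by omega) _).symm
      rw [hins]
      refine key _ _ ?_
      rw [mem_faceDel]
      simp [uOf]
    · obtain ⟨p, -, rfl⟩ := Finset.mem_image.mp himg
      exact key p.1 _ (vOf_not_mem_faceDel p.1 p.2)

end PsiAux
namespace PsiAux

open ExteriorAlgebra

lemma extWedge_eq_iotaMulti {n : ℕ} (f : Fin n → (Fin n → ℝ)) (k : ℕ)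
    (τ : Finset (Fin n)) (hτ : τ.card = k) :
    extWedge f τ = ιMulti ℝ k (fun j => f (τ.orderEmbOfFin hτ j)) := by
  rw [ιMulti_apply, extWedge]
  congr 1
  have hlen : (τ.sort (· ≤ ·)).length = k := by rw [Finset.length_sort, hτ]
  apply List.ext_getElem (by simp [hlen])
  intro i h1 h2
  have hik : i < k := by rw [← hlen]; simpa using h1
  simp only [List.getElem_map, List.getElem_ofFn]
  congr 1

noncomputable def dualFun (d n : ℕ) (b : Module.Basis (Fin n) ℝ (Fin n → ℝ))
    (τ0 : Finset (Fin n)) (h0 : τ0.card = d) :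
    ExteriorAlgebra ℝ (Fin n → ℝ) →ₗ[ℝ] ℝ :=
  ExteriorAlgebra.liftAlternating (fun k =>
    if h : k = d then
      ((Matrix.detRowAlternating : (Fin d → ℝ) [⋀^Fin d]→ₗ[ℝ] ℝ).compLinearMap
        (LinearMap.pi (fun j : Fin d =>
          (Finsupp.lapply (τ0.orderEmbOfFin h0 j)).comp
            b.repr.toLinearMap))).domDomCongr (finCongr h.symm)
    else 0)

lemma dualFun_extWedge {d n : ℕ} (b : Module.Basis (Fin n) ℝ (Fin n → ℝ))
    (f : Fin n → (Fin n → ℝ)) (hb : ⇑b = f) (τ0 τ : Finset (Fin n))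
    (h0 : τ0.card = d) (hτ : τ.card = d) :
    dualFun d n b τ0 h0 (extWedge f τ) = if τ = τ0 then 1 else 0 := by
  rw [extWedge_eq_iotaMulti f d τ hτ, dualFun, liftAlternating_apply_ιMulti, dif_pos rfl,
    finCongr_refl, AlternatingMap.domDomCongr_refl, AlternatingMap.compLinearMap_apply]
  have hM : ∀ j k : Fin d,
      LinearMap.pi (fun j : Fin d =>
          (Finsupp.lapply (τ0.orderEmbOfFin h0 j)).comp b.repr.toLinearMap)
        (f (τ.orderEmbOfFin hτ j)) k
      = if τ.orderEmbOfFin hτ j = τ0.orderEmbOfFin h0 k then (1 : ℝ) else 0 := by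
    intro j k
    simp only [LinearMap.pi_apply, LinearMap.comp_apply, Finsupp.lapply_apply,
      LinearEquiv.coe_toLinearMap]
    rw [← hb, Module.Basis.repr_self, Finsupp.single_apply]
  by_cases he : τ = τ0
  · subst he
    have hpe : hτ = h0 := rfl
    subst hpe
    rw [if_pos rfl]
    have h2 : (fun j : Fin d =>
        LinearMap.pi (fun j : Fin d =>
          (Finsupp.lapply (τ.orderEmbOfFin hτ j)).comp b.repr.toLinearMap)
          (f (τ.orderEmbOfFin hτ j)))
        = (1 : Matrix (Fin d) (Fin d) ℝ) := by
      funext j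
      funext k
      rw [hM j k, Matrix.one_apply]
      congr 1
      simp only [eq_iff_iff, (τ.orderEmbOfFin hτ).injective.eq_iff]
    rw [Matrix.detRowAlternating]
    show Matrix.det _ = 1
    rw [h2]
    exact Matrix.det_one
  · rw [if_neg he]
    have hns : ¬ τ ⊆ τ0 := by
      intro hsub
      exact he (Finset.eq_of_subset_of_card_le hsub (by rw [h0, hτ]))
    obtain ⟨x, hx, hx0⟩ := Finset.not_subset.mp hns
    have hx' : x ∈ Set.range (τ.orderEmbOfFin hτ) := by
      rw [Finset.range_orderEmbOfFin]; exact hx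
    obtain ⟨j, rfl⟩ := hx'
    rw [Matrix.detRowAlternating]
    show Matrix.det _ = 0
    apply Matrix.det_eq_zero_of_row_eq_zero j
    intro k
    show LinearMap.pi _ _ k = 0
    rw [hM j k, if_neg]
    intro h
    exact hx0 (h ▸ Finset.orderEmbOfFin_mem τ0 h0 k)

lemma linearIndependent_extWedge {d n : ℕ} (hd : 2 ≤ d) (hn : d + 1 ≤ n)
    (f : Fin n → (Fin n → ℝ)) (b : Module.Basis (Fin n) ℝ (Fin n → ℝ)) (hb : ⇑b = f) :
    LinearIndependent ℝ (fun τ : {τ : Finset (Fin n) // τ ∈ Jset d n} => extWedge f τ.1) := by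
  have hcard : ∀ τ : {τ : Finset (Fin n) // τ ∈ Jset d n}, τ.1.card = d :=
    fun τ => ((mem_Jset_iff hd hn τ.1).mp τ.2).1
  rw [Fintype.linearIndependent_iff]
  intro g hg τ0
  have happ := congrArg (dualFun d n b τ0.1 (hcard τ0)) hg
  rw [map_sum, map_zero] at happ
  have hterm : ∀ τ : {τ : Finset (Fin n) // τ ∈ Jset d n},
      dualFun d n b τ0.1 (hcard τ0) (g τ • extWedge f τ.1)
        = if τ = τ0 then g τ else 0 := by
    intro τ
    rw [map_smul, dualFun_extWedge b f hb τ0.1 τ.1 (hcard τ0) (hcard τ)]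
    by_cases h : τ = τ0
    · rw [if_pos (Subtype.ext_iff.mp h), if_pos h]
      simp
    · rw [if_neg (fun hh => h (Subtype.ext hh)), if_neg h]
      simp
  rw [Finset.sum_congr rfl (fun τ _ => hterm τ)] at happ
  rwa [Finset.sum_ite_eq' Finset.univ τ0 g, if_pos (Finset.mem_univ _)] at happ

end PsiAux
/-- Lemma 2.4: the image of `ψ` is spanned by
`{f_τ : |τ| = d, τ ≤_p {1,3,4,…,d,n}}` and its kernel has dimension `d²-d-1`. -/
theorem psiMap_range_and_ker (d n : ℕ) (hd : 2 ≤ d) (hn : d + 1 ≤ n)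
    (f : Fin n → (Fin n → ℝ)) (hf : ∃ b : Module.Basis (Fin n) ℝ (Fin n → ℝ), ⇑b = f) :
    LinearMap.range (psiMap d n f) =
      Submodule.span ℝ
        {x | ∃ τ : Finset (Fin n), τ.card = d ∧ pLE τ (sigma0 d n) ∧ x = extWedge f τ} ∧
    Module.finrank ℝ (LinearMap.ker (psiMap d n f)) = d ^ 2 - d - 1 := by
  obtain ⟨b, hb⟩ := hf
  have hrange : LinearMap.range (psiMap d n f) = Submodule.span ℝ
      {x | ∃ τ : Finset (Fin n), τ.card = d ∧ pLE τ (sigma0 d n) ∧ x = extWedge f τ} := by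
    rw [PsiAux.range_psiMap d n f b hb, PsiAux.span_S_eq_span_T d n hd hn f]
  refine ⟨hrange, ?_⟩
  have hTset : {x | ∃ τ : Finset (Fin n), τ.card = d ∧ pLE τ (sigma0 d n) ∧ x = extWedge f τ}
      = Set.range (fun τ : {τ : Finset (Fin n) // τ ∈ PsiAux.Jset d n} => extWedge f τ.1) := by
    ext x
    constructor
    · rintro ⟨τ, h1, h2, rfl⟩
      exact ⟨⟨τ, (PsiAux.mem_Jset_iff hd hn τ).mpr ⟨h1, h2⟩⟩, rfl⟩
    · rintro ⟨⟨τ, hτ⟩, rfl⟩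
      obtain ⟨h1, h2⟩ := (PsiAux.mem_Jset_iff hd hn τ).mp hτ
      exact ⟨τ, h1, h2, rfl⟩
  have hfr : Module.finrank ℝ (LinearMap.range (psiMap d n f)) = 1 + (d - 1) * (n - d) := by
    rw [hrange, hTset,
      finrank_span_eq_card (PsiAux.linearIndependent_extWedge hd hn f b hb),
      Fintype.card_coe, PsiAux.card_Jset hd hn]
  have hdom : Module.finrank ℝ (Fin (d - 1) → (Fin n → ℝ)) = (d - 1) * n := by
    rw [Module.finrank_pi_fintype]
    simp [Module.finrank_fin_fun, Finset.sum_const, mul_comm]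
  have hrn := LinearMap.finrank_range_add_finrank_ker (psiMap d n f)
  rw [hdom, hfr] at hrn
  obtain ⟨a, rfl⟩ : ∃ a, d = a + 2 := ⟨d - 2, by omega⟩
  obtain ⟨m, rfl⟩ : ∃ m, n = a + 3 + m := ⟨n - (a + 3), by omega⟩
  generalize hK : Module.finrank ℝ ↥(LinearMap.ker (psiMap (a + 2) (a + 3 + m) f)) = K at hrn ⊢
  have e1 : a + 2 - 1 = a + 1 := by omega
  have e2 : a + 3 + m - (a + 2) = m + 1 := by omega
  rw [e1, e2] at hrn
  have e3 : (a + 2) ^ 2 - (a + 2) - 1 = a * a + 3 * a + 1 := by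
    have : (a + 2) ^ 2 = a * a + 4 * a + 4 := by ring
    omega
  rw [e3]
  have e4 : (a + 1) * (m + 1) = a * m + a + m + 1 := by ring
  have e5 : (a + 1) * (a + 3 + m) = a * a + a * m + 4 * a + m + 3 := by ring
  rw [e4, e5] at hrn
  omega
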